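/- In any graph G in class B, every hole has exactly four vertices, two in X and two in Y, and every vertex outside any hole H has at most two neighbors on H; consequently G contains no wheel. -/

import Mathlib

open SimpleGraph

/-- `G` contains an induced copy of `H`. -/
def ContainsInduced {V W : Type*} (G : SimpleGraph V) (H : SimpleGraph W) : Prop :=
  ∃ f : W ↪ V, ∀ u v, G.Adj (f u) (f v) ↔ H.Adj u v

/-- The path on 5 vertices. -/
def path5 : SimpleGraph (Fin 5) :=
  SimpleGraph.fromRel (fun i j => (i : ℕ) + 1 = (j : ℕ))

/-- Two disjoint edges. -/
def twoK2 : SimpleGraph (Fin 4) :=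
  SimpleGraph.fromRel (fun i j => (i = 0 ∧ j = 1) ∨ (i = 2 ∧ j = 3))

/-- The cycle on `n` vertices (for `n ≥ 3`). -/
def cycG (n : ℕ) : SimpleGraph (Fin n) :=
  SimpleGraph.fromRel (fun i j => ((i : ℕ) + 1) % n = (j : ℕ))

/-- `G` contains an induced wheel: an induced (chordless) cycle of length at least 4
plus a vertex with at least three neighbors on the cycle. -/
def ContainsWheel {V : Type*} (G : SimpleGraph V) : Prop :=
  ∃ n : ℕ, 4 ≤ n ∧ ∃ (f : Fin n ↪ V) (hub : V),
    (∀ i, hub ≠ f i) ∧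
    (∀ i j, G.Adj (f i) (f j) ↔ (cycG n).Adj i j) ∧
    3 ≤ {i : Fin n | G.Adj hub (f i)}.ncard

/-- `G` contains an induced wheel on at most `k` vertices. -/
def ContainsWheelLE {V : Type*} (G : SimpleGraph V) (k : ℕ) : Prop :=
  ∃ n : ℕ, 4 ≤ n ∧ n + 1 ≤ k ∧ ∃ (f : Fin n ↪ V) (hub : V),
    (∀ i, hub ≠ f i) ∧
    (∀ i j, G.Adj (f i) (f j) ↔ (cycG n).Adj i j) ∧
    3 ≤ {i : Fin n | G.Adj hub (f i)}.ncard

/-- `s` is the vertex set of a hole (induced cycle of length at least 4) of `G`. -/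
def IsHoleSet {V : Type*} (G : SimpleGraph V) (s : Set V) : Prop :=
  ∃ n : ℕ, 4 ≤ n ∧ ∃ f : Fin n ↪ V, Set.range f = s ∧
    ∀ i j, G.Adj (f i) (f j) ↔ (cycG n).Adj i j

/-- `G` is a split graph: its vertex set partitions into a stable set and a clique. -/
def IsSplit {V : Type*} (G : SimpleGraph V) : Prop :=
  ∃ S K : Set V, (∀ v, v ∈ S ∨ v ∈ K) ∧ S ∩ K = ∅ ∧
    (∀ u ∈ S, ∀ v ∈ S, ¬G.Adj u v) ∧ G.IsClique K

private lemma modcases (n k : ℕ) (hk : k < 2*n) :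
    (k < n ∧ k % n = k) ∨ (n ≤ k ∧ k % n = k - n) := by
  rcases lt_or_ge k n with h|h
  · exact Or.inl ⟨h, Nat.mod_eq_of_lt h⟩
  · refine Or.inr ⟨h, ?_⟩
    rw [Nat.mod_eq_sub_mod h]
    exact Nat.mod_eq_of_lt (by omega)

private lemma mod_succ_pred (n : ℕ) (hn : 1 ≤ n) (i : ℕ) (hi : i < n) :
    ((i + (n-1)) % n + 1) % n = i := by
  rw [Nat.mod_add_mod]
  have h : i + (n-1) + 1 = i + n := by omega
  rw [h, Nat.add_mod_right, Nat.mod_eq_of_lt hi]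

theorem stmt_11 {V : Type*} (G : SimpleGraph V) (X Y Z W : Set V) (x y : V)
    (hpart : ∀ v : V, v ∈ X ∨ v ∈ Y ∨ v ∈ Z ∨ v ∈ W)
    (hXY : X ∩ Y = ∅) (hXZ : X ∩ Z = ∅) (hXW : X ∩ W = ∅)
    (hYZ : Y ∩ Z = ∅) (hYW : Y ∩ W = ∅) (hZW : Z ∩ W = ∅)
    (hXs : ∀ u ∈ X, ∀ v ∈ X, ¬G.Adj u v) (hYs : ∀ u ∈ Y, ∀ v ∈ Y, ¬G.Adj u v)
    (hZs : ∀ u ∈ Z, ∀ v ∈ Z, ¬G.Adj u v) (hWs : ∀ u ∈ W, ∀ v ∈ W, ¬G.Adj u v)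
    (hxX : x ∈ X) (hyY : y ∈ Y)
    (hX2 : ∃ x' ∈ X, x' ≠ x) (hY2 : ∃ y' ∈ Y, y' ≠ y)
    (hconn : (G.induce (X ∪ Y)).Connected)
    (hP5 : ¬∃ f : Fin 5 ↪ V, (∀ i, f i ∈ X ∪ Y) ∧
      ∀ i j, G.Adj (f i) (f j) ↔ path5.Adj i j)
    (hW : ∀ w ∈ W, ∀ v ∈ X ∪ Y ∪ Z, ¬G.Adj w v)
    (hxY : ∀ v ∈ Y, G.Adj x v) (hyX : ∀ v ∈ X, G.Adj y v)
    (hZ : ∀ z ∈ Z, G.Adj z x ∧ G.Adj z y ∧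
      ∀ v ∈ X ∪ Y, v ≠ x → v ≠ y → ¬G.Adj z v) :
    (∀ s : Set V, IsHoleSet G s →
      s.ncard = 4 ∧ (s ∩ X).ncard = 2 ∧ (s ∩ Y).ncard = 2 ∧
        ∀ v ∉ s, ({u ∈ s | G.Adj v u}).ncard ≤ 2) ∧
    ¬ContainsWheel G := by
    classical
  have hdisjXY : ∀ v, v ∈ X → v ∈ Y → False := fun v h h' =>
    Set.eq_empty_iff_forall_notMem.mp hXY v ⟨h, h'⟩
  have hxy : x ≠ y := fun h => hdisjXY x hxX (h ▸ hyY)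
  have hAxy : G.Adj x y := hxY y hyY
  have hZnbr : ∀ z ∈ Z, ∀ u, G.Adj z u → u = x ∨ u = y := by
    intro z hz u hu
    by_cases hux : u = x
    · exact Or.inl hux
    by_cases huy : u = y
    · exact Or.inr huy
    exfalso
    rcases hpart u with h|h|h|h
    · exact (hZ z hz).2.2 u (Set.mem_union_left _ h) hux huy hu
    · exact (hZ z hz).2.2 u (Set.mem_union_right _ h) hux huy hu
    · exact hZs z hz u h hu
    · exact hW u h z (Set.mem_union_right _ hz) hu.symm
  have key : ∀ n : ℕ, 4 ≤ n → ∀ f : Fin n ↪ V,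
      (∀ i j, G.Adj (f i) (f j) ↔ (cycG n).Adj i j) →
      n = 4 ∧ (Set.range f).ncard = 4 ∧ (Set.range f ∩ X).ncard = 2 ∧
        (Set.range f ∩ Y).ncard = 2 ∧
        ∀ v ∉ Set.range f, ({u ∈ Set.range f | G.Adj v u}).ncard ≤ 2 := by
    intro n hn f hf
    have hcyc : ∀ i j : Fin n, (cycG n).Adj i j ↔
        i ≠ j ∧ (((i:ℕ)+1) % n = (j:ℕ) ∨ ((j:ℕ)+1) % n = (i:ℕ)) := by
      intro i j
      simp [cycG, SimpleGraph.fromRel_adj]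
    have hnext : ∀ i : Fin n,
        G.Adj (f i) (f ⟨((i:ℕ)+1) % n, Nat.mod_lt _ (by omega)⟩) := by
      intro i
      rw [hf, hcyc]
      have hilt := i.isLt
      have m1 := modcases n ((i:ℕ)+1) (by omega)
      refine ⟨?_, Or.inl rfl⟩
      intro h
      have h2 : (i:ℕ) = ((i:ℕ)+1) % n := congrArg Fin.val h
      omega
    have hprev : ∀ i : Fin n,
        G.Adj (f i) (f ⟨((i:ℕ)+(n-1)) % n, Nat.mod_lt _ (by omega)⟩) := by
      intro i
      rw [hf, hcyc]
      have hilt := i.isLt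
      have m2 := modcases n ((i:ℕ)+(n-1)) (by omega)
      refine ⟨?_, Or.inr (mod_succ_pred n (by omega) i hilt)⟩
      intro h
      have h2 : (i:ℕ) = ((i:ℕ)+(n-1)) % n := congrArg Fin.val h
      omega
    have memW : ∀ i : Fin n, f i ∉ W := by
      intro i hiW
      have h := hnext i
      rcases hpart (f ⟨((i:ℕ)+1) % n, Nat.mod_lt _ (by omega)⟩) with h'|h'|h'|h'
      · exact hW _ hiW _ (Set.mem_union_left _ (Set.mem_union_left _ h')) h
      · exact hW _ hiW _ (Set.mem_union_left _ (Set.mem_union_right _ h')) h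
      · exact hW _ hiW _ (Set.mem_union_right _ h') h
      · exact hWs _ hiW _ h' h
    have memZ : ∀ i : Fin n, f i ∉ Z := by
      intro i hiZ
      have hilt := i.isLt
      have m1 := modcases n ((i:ℕ)+1) (by omega)
      have m2 := modcases n ((i:ℕ)+(n-1)) (by omega)
      have m3 := modcases n ((i:ℕ)+2) (by omega)
      have hia := hprev i
      have hib := hnext i
      have hfab : f ⟨((i:ℕ)+(n-1)) % n, Nat.mod_lt _ (by omega)⟩ ≠
          f ⟨((i:ℕ)+1) % n, Nat.mod_lt _ (by omega)⟩ := by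
        intro h
        have h2 : ((i:ℕ)+(n-1)) % n = ((i:ℕ)+1) % n :=
          congrArg Fin.val (f.injective h)
        omega
      have ra := hZnbr _ hiZ _ hia
      have rb := hZnbr _ hiZ _ hib
      have hadjab : G.Adj (f ⟨((i:ℕ)+(n-1)) % n, Nat.mod_lt _ (by omega)⟩)
          (f ⟨((i:ℕ)+1) % n, Nat.mod_lt _ (by omega)⟩) := by
        rcases ra with h|h <;> rcases rb with h'|h'
        · exact absurd (h.trans h'.symm) hfab
        · rw [h, h']; exact hAxy
        · rw [h, h']; exact hAxy.symm
        · exact absurd (h.trans h'.symm) hfab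
      obtain ⟨-, hor⟩ := (hcyc _ _).mp ((hf _ _).mp hadjab)
      have hor2 : (((i:ℕ)+(n-1)) % n + 1) % n = ((i:ℕ)+1) % n ∨
          (((i:ℕ)+1) % n + 1) % n = ((i:ℕ)+(n-1)) % n := hor
      have e1 : (((i:ℕ)+(n-1)) % n + 1) % n = (i:ℕ) :=
        mod_succ_pred n (by omega) i hilt
      have e2 : (((i:ℕ)+1) % n + 1) % n = ((i:ℕ)+2) % n := by
        rw [Nat.mod_add_mod]
      rw [e1, e2] at hor2
      omega
    have memXY : ∀ i : Fin n, f i ∈ X ∪ Y := by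
      intro i
      rcases hpart (f i) with h|h|h|h
      · exact Set.mem_union_left _ h
      · exact Set.mem_union_right _ h
      · exact absurd h (memZ i)
      · exact absurd h (memW i)
    have memXY' : ∀ i : Fin n, f i ∈ X ∨ f i ∈ Y := fun i => memXY i
    have hside : ∀ i j : Fin n, G.Adj (f i) (f j) → (f i ∈ X ↔ f j ∈ Y) := by
      intro i j h
      constructor
      · intro hiX
        rcases memXY' j with h'|h'
        · exact absurd h (hXs _ hiX _ h')
        · exact h'
      · intro hjY
        rcases memXY' i with h'|h'
        · exact h'
        · exact absurd h (hYs _ h' _ hjY)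
    have hn5 : n ≤ 5 := by
      by_contra hcon
      push_neg at hcon
      apply hP5
      refine ⟨⟨fun j => f ⟨(j:ℕ), by omega⟩, ?_⟩, fun j => memXY _, ?_⟩
      · intro j k hjk
        have h2 := f.injective hjk
        have h3 := congrArg Fin.val h2
        exact Fin.ext h3
      · intro j k
        change G.Adj (f ⟨(j:ℕ), _⟩) (f ⟨(k:ℕ), _⟩) ↔ path5.Adj j k
        rw [hf, hcyc]
        have hj := j.isLt
        have hk := k.isLt
        have e1 : ((j:ℕ)+1) % n = (j:ℕ)+1 := Nat.mod_eq_of_lt (by omega)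
        have e2 : ((k:ℕ)+1) % n = (k:ℕ)+1 := Nat.mod_eq_of_lt (by omega)
        simp only [path5, SimpleGraph.fromRel_adj, ne_eq, Fin.ext_iff, Fin.val_mk]
        rw [e1, e2]
    have hn5' : n ≠ 5 := by
      intro h
      subst h
      have a01 : G.Adj (f 0) (f 1) := (hf 0 1).mpr ((hcyc 0 1).mpr (by decide))
      have a12 : G.Adj (f 1) (f 2) := (hf 1 2).mpr ((hcyc 1 2).mpr (by decide))
      have a23 : G.Adj (f 2) (f 3) := (hf 2 3).mpr ((hcyc 2 3).mpr (by decide))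
      have a34 : G.Adj (f 3) (f 4) := (hf 3 4).mpr ((hcyc 3 4).mpr (by decide))
      have a40 : G.Adj (f 4) (f 0) := (hf 4 0).mpr ((hcyc 4 0).mpr (by decide))
      have s01 := hside 0 1 a01
      have s12 := hside 1 2 a12
      have s23 := hside 2 3 a23
      have s34 := hside 3 4 a34
      have s40 := hside 4 0 a40
      rcases memXY' 0 with p0|q0
      · have q1 : f 1 ∈ Y := s01.mp p0
        have p2 : f 2 ∈ X := by
          rcases memXY' 2 with h|h
          · exact h
          · cases hdisjXY _ (s12.mpr h) q1
        have q3 : f 3 ∈ Y := s23.mp p2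
        have p4 : f 4 ∈ X := by
          rcases memXY' 4 with h|h
          · exact h
          · cases hdisjXY _ (s34.mpr h) q3
        exact hdisjXY _ p0 (s40.mp p4)
      · have p4 : f 4 ∈ X := s40.mpr q0
        have q3 : f 3 ∈ Y := by
          rcases memXY' 3 with h|h
          · cases hdisjXY _ p4 (s34.mp h)
          · exact h
        have p2 : f 2 ∈ X := s23.mpr q3
        have q1 : f 1 ∈ Y := by
          rcases memXY' 1 with h|h
          · cases hdisjXY _ p2 (s12.mp h)
          · exact h
        exact hdisjXY _ (s01.mpr q1) q0
    have hn4 : n = 4 := by omega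
    subst hn4
    have a01 : G.Adj (f 0) (f 1) := (hf 0 1).mpr ((hcyc 0 1).mpr (by decide))
    have a12 : G.Adj (f 1) (f 2) := (hf 1 2).mpr ((hcyc 1 2).mpr (by decide))
    have a23 : G.Adj (f 2) (f 3) := (hf 2 3).mpr ((hcyc 2 3).mpr (by decide))
    have a30 : G.Adj (f 3) (f 0) := (hf 3 0).mpr ((hcyc 3 0).mpr (by decide))
    have hinj : ∀ i j : Fin 4, i ≠ j → f i ≠ f j :=
      fun i j h h' => h (f.injective h')
    have hc4 : (Set.range f).ncard = 4 := by
      rw [← Nat.card_coe_set_eq, Nat.card_range_of_injective f.injective,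
        Nat.card_eq_fintype_card, Fintype.card_fin]
    have inter2 : ∀ (S : Set V) (i j k l : Fin 4),
        (∀ m : Fin 4, m = i ∨ m = j ∨ m = k ∨ m = l) →
        f i ∈ S → f j ∈ S → f k ∉ S → f l ∉ S →
        Set.range f ∩ S = {f i, f j} := by
      intro S i j k l hcov hi hj hk hl
      ext u
      constructor
      · rintro ⟨⟨m, rfl⟩, hu⟩
        rcases hcov m with rfl|rfl|rfl|rfl
        · exact Set.mem_insert _ _
        · exact Set.mem_insert_of_mem _ rfl
        · exact absurd hu hk
        · exact absurd hu hl
      · rintro (rfl|rfl)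
        · exact ⟨⟨i, rfl⟩, hi⟩
        · exact ⟨⟨j, rfl⟩, hj⟩
    have nbr : (Set.range f ∩ X).ncard = 2 → (Set.range f ∩ Y).ncard = 2 →
        ∀ v ∉ Set.range f, ({u ∈ Set.range f | G.Adj v u}).ncard ≤ 2 := by
      intro hcX hcY v hv
      have hfin : (Set.range f).Finite := Set.finite_range f
      rcases hpart v with h|h|h|h
      · have hsub : {u ∈ Set.range f | G.Adj v u} ⊆ Set.range f ∩ Y := by
          rintro u ⟨hu, hadj⟩
          refine ⟨hu, ?_⟩
          obtain ⟨m, rfl⟩ := hu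
          rcases memXY' m with h'|h'
          · exact absurd hadj (hXs v h _ h')
          · exact h'
        calc ({u ∈ Set.range f | G.Adj v u}).ncard
            ≤ (Set.range f ∩ Y).ncard :=
              Set.ncard_le_ncard hsub (hfin.inter_of_left _)
          _ = 2 := hcY
      · have hsub : {u ∈ Set.range f | G.Adj v u} ⊆ Set.range f ∩ X := by
          rintro u ⟨hu, hadj⟩
          refine ⟨hu, ?_⟩
          obtain ⟨m, rfl⟩ := hu
          rcases memXY' m with h'|h'
          · exact h'
          · exact absurd hadj (hYs v h _ h')
        calc ({u ∈ Set.range f | G.Adj v u}).ncard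
            ≤ (Set.range f ∩ X).ncard :=
              Set.ncard_le_ncard hsub (hfin.inter_of_left _)
          _ = 2 := hcX
      · have hsub : {u ∈ Set.range f | G.Adj v u} ⊆ ({x, y} : Set V) := by
          rintro u ⟨hu, hadj⟩
          rcases hZnbr v h u hadj with rfl|rfl
          · exact Set.mem_insert _ _
          · exact Set.mem_insert_of_mem _ rfl
        calc ({u ∈ Set.range f | G.Adj v u}).ncard
            ≤ ({x, y} : Set V).ncard := Set.ncard_le_ncard hsub
              ((Set.finite_singleton y).insert x)
          _ = 2 := Set.ncard_pair hxy
      · have hsub : {u ∈ Set.range f | G.Adj v u} = ∅ := by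
          apply Set.eq_empty_iff_forall_notMem.mpr
          rintro u ⟨⟨m, rfl⟩, hadj⟩
          exact hW v h _ (Set.mem_union_left _ (memXY m)) hadj
        rw [hsub]
        simp
    rcases memXY' 0 with h0|h0
    · have h1 : f 1 ∈ Y := (hside 0 1 a01).mp h0
      have h2 : f 2 ∈ X := (hside 2 1 a12.symm).mpr h1
      have h3 : f 3 ∈ Y := (hside 0 3 a30.symm).mp h0
      have hIX : Set.range f ∩ X = {f 0, f 2} :=
        inter2 X 0 2 1 3 (by decide) h0 h2
          (fun h => hdisjXY _ h h1) (fun h => hdisjXY _ h h3)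
      have hIY : Set.range f ∩ Y = {f 1, f 3} :=
        inter2 Y 1 3 0 2 (by decide) h1 h3
          (fun h => hdisjXY _ h0 h) (fun h => hdisjXY _ h2 h)
      have cX : (Set.range f ∩ X).ncard = 2 := by
        rw [hIX]; exact Set.ncard_pair (hinj 0 2 (by decide))
      have cY : (Set.range f ∩ Y).ncard = 2 := by
        rw [hIY]; exact Set.ncard_pair (hinj 1 3 (by decide))
      exact ⟨rfl, hc4, cX, cY, nbr cX cY⟩
    · have h1 : f 1 ∈ X := (hside 1 0 a01.symm).mpr h0
      have h2 : f 2 ∈ Y := (hside 1 2 a12).mp h1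
      have h3 : f 3 ∈ X := (hside 3 0 a30).mpr h0
      have hIX : Set.range f ∩ X = {f 1, f 3} :=
        inter2 X 1 3 0 2 (by decide) h1 h3
          (fun h => hdisjXY _ h h0) (fun h => hdisjXY _ h h2)
      have hIY : Set.range f ∩ Y = {f 0, f 2} :=
        inter2 Y 0 2 1 3 (by decide) h0 h2
          (fun h => hdisjXY _ h1 h) (fun h => hdisjXY _ h3 h)
      have cX : (Set.range f ∩ X).ncard = 2 := by
        rw [hIX]; exact Set.ncard_pair (hinj 1 3 (by decide))
      have cY : (Set.range f ∩ Y).ncard = 2 := by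
        rw [hIY]; exact Set.ncard_pair (hinj 0 2 (by decide))
      exact ⟨rfl, hc4, cX, cY, nbr cX cY⟩
  constructor
  · rintro s ⟨n, hn, f, rfl, hf⟩
    obtain ⟨-, hc4, cX, cY, nbr⟩ := key n hn f hf
    exact ⟨hc4, cX, cY, nbr⟩
  · rintro ⟨n, hn, f, hub, hne, hindc, hcard⟩
    obtain ⟨-, -, -, -, nbr⟩ := key n hn f hindc
    have hhub : hub ∉ Set.range f := by
      rintro ⟨i, rfl⟩
      exact hne i rfl
    have himg : f '' {i | G.Adj hub (f i)} = {u ∈ Set.range f | G.Adj hub u} := by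
      ext u
      constructor
      · rintro ⟨i, hi, rfl⟩
        exact ⟨⟨i, rfl⟩, hi⟩
      · rintro ⟨⟨i, rfl⟩, h⟩
        exact ⟨i, h, rfl⟩
    have hle := nbr hub hhub
    rw [← himg, Set.ncard_image_of_injective _ f.injective] at hle
    omega
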